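/- Consider the population protocol on state set {1,2,3,4,a,b,c,d} with transitions 1c→2d, 2b→1d, 1a→3b, 3d→4c, 4b→3c, 3a→1b (all other interactions are no-ops). For any configuration C containing exactly one agent in a numbered state q ∈ {1,2,3,4}, define f(C) = 2^a(2c+d) if q=1, 2^a(2c+d+1) if q=2, 2^a(2d+c) if q=3, 2^a(2d+c+1) if q=4, where a,b,c,d denote the counts of agents in states a,b,c,d. Then f is non-increasing along every transition: if C → C' in one step, then f(C') ≤ f(C). -/
import Mathlib


/-- A configuration of the doubling protocol on states `{1,2,3,4,a,b,c,d}`,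
recorded as counts of agents in each state. -/
structure Conf where
  n1 : ℕ
  n2 : ℕ
  n3 : ℕ
  n4 : ℕ
  a : ℕ
  b : ℕ
  c : ℕ
  d : ℕ

/-- One step of the protocol with transitions
`1c→2d, 2b→1d, 1a→3b, 3d→4c, 4b→3c, 3a→1b` (all other interactions are no-ops,
which do not change the count vector). -/
def DStep (C C' : Conf) : Prop :=
  (1 ≤ C.n1 ∧ 1 ≤ C.c ∧ C' = ⟨C.n1 - 1, C.n2 + 1, C.n3, C.n4, C.a, C.b, C.c - 1, C.d + 1⟩) ∨
  (1 ≤ C.n2 ∧ 1 ≤ C.b ∧ C' = ⟨C.n1 + 1, C.n2 - 1, C.n3, C.n4, C.a, C.b - 1, C.c, C.d + 1⟩) ∨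
  (1 ≤ C.n1 ∧ 1 ≤ C.a ∧ C' = ⟨C.n1 - 1, C.n2, C.n3 + 1, C.n4, C.a - 1, C.b + 1, C.c, C.d⟩) ∨
  (1 ≤ C.n3 ∧ 1 ≤ C.d ∧ C' = ⟨C.n1, C.n2, C.n3 - 1, C.n4 + 1, C.a, C.b, C.c + 1, C.d - 1⟩) ∨
  (1 ≤ C.n4 ∧ 1 ≤ C.b ∧ C' = ⟨C.n1, C.n2, C.n3 + 1, C.n4 - 1, C.a, C.b - 1, C.c + 1, C.d⟩) ∨
  (1 ≤ C.n3 ∧ 1 ≤ C.a ∧ C' = ⟨C.n1 + 1, C.n2, C.n3 - 1, C.n4, C.a - 1, C.b + 1, C.c, C.d⟩)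

/-- `C` has exactly one agent in a numbered state. -/
def OneNumbered (C : Conf) : Prop :=
  C.n1 + C.n2 + C.n3 + C.n4 = 1

/-- The potential function `f` (meaningful when `C` has exactly one numbered agent). -/
def fPot (C : Conf) : ℕ :=
  if C.n1 = 1 then 2 ^ C.a * (2 * C.c + C.d)
  else if C.n2 = 1 then 2 ^ C.a * (2 * C.c + C.d + 1)
  else if C.n3 = 1 then 2 ^ C.a * (2 * C.d + C.c)
  else 2 ^ C.a * (2 * C.d + C.c + 1)

/-- `f` is non-increasing along every transition. -/
theorem fPot_nonincreasing (C C' : Conf) (h1 : OneNumbered C) (h : DStep C C') :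
    fPot C' ≤ fPot C := by

  obtain ⟨n1, n2, n3, n4, a, b, c, d⟩ := C
  unfold OneNumbered at h1
  simp only at h1
  rcases h with ⟨ha, hb, rfl⟩ | ⟨ha, hb, rfl⟩ | ⟨ha, hb, rfl⟩ | ⟨ha, hb, rfl⟩ |
    ⟨ha, hb, rfl⟩ | ⟨ha, hb, rfl⟩ <;> simp only at ha hb ⊢
  · obtain ⟨e1, e2, e3, e4⟩ : n1 = 1 ∧ n2 = 0 ∧ n3 = 0 ∧ n4 = 0 := by omega
    simp only [fPot, e1, e2, e3, e4]
    norm_num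
    omega
  · obtain ⟨e1, e2, e3, e4⟩ : n1 = 0 ∧ n2 = 1 ∧ n3 = 0 ∧ n4 = 0 := by omega
    simp only [fPot, e1, e2, e3, e4]
    norm_num
    omega
  · obtain ⟨e1, e2, e3, e4⟩ : n1 = 1 ∧ n2 = 0 ∧ n3 = 0 ∧ n4 = 0 := by omega
    simp only [fPot, e1, e2, e3, e4]
    norm_num
    obtain ⟨a', rfl⟩ : ∃ a', a = a' + 1 := ⟨a - 1, by omega⟩
    rw [pow_succ]
    calc 2 ^ a' * (2 * d + c) ≤ 2 ^ a' * (2 * (2 * c + d)) :=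
          by gcongr _ * ?_; omega
      _ = 2 ^ a' * 2 * (2 * c + d) := by ring
  · obtain ⟨e1, e2, e3, e4⟩ : n1 = 0 ∧ n2 = 0 ∧ n3 = 1 ∧ n4 = 0 := by omega
    simp only [fPot, e1, e2, e3, e4]
    norm_num
    omega
  · obtain ⟨e1, e2, e3, e4⟩ : n1 = 0 ∧ n2 = 0 ∧ n3 = 0 ∧ n4 = 1 := by omega
    simp only [fPot, e1, e2, e3, e4]
    norm_num
    omega
  · obtain ⟨e1, e2, e3, e4⟩ : n1 = 0 ∧ n2 = 0 ∧ n3 = 1 ∧ n4 = 0 := by omega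
    simp only [fPot, e1, e2, e3, e4]
    norm_num
    obtain ⟨a', rfl⟩ : ∃ a', a = a' + 1 := ⟨a - 1, by omega⟩
    rw [pow_succ]
    calc 2 ^ a' * (2 * c + d) ≤ 2 ^ a' * (2 * (2 * d + c)) :=
          by gcongr _ * ?_; omega
      _ = 2 ^ a' * 2 * (2 * d + c) := by ring
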